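/- Let ρ : M_J(ℂ) → M_n(ℂ) be a unital 2-positive linear map, τ the normalized trace on M_n(ℂ), and x ∈ M_J(ℂ) a contraction with polar decomposition x = v₀|x| where v₀ is unitary. If τ(ρ(x*x)) > 1 − 2ε for some ε > 0, then ‖ρ(v₀) − ρ(x)‖₂² < 2ε, where ‖a‖₂² = τ(a*a). -/

import Mathlib

open ComplexOrder

/-- A linear map between matrix algebras is 2-positive if its amplification to
2×2 block matrices preserves positive semidefiniteness. -/
def TwoPositive {J n : ℕ}
    (ρ : Matrix (Fin J) (Fin J) ℂ →ₗ[ℂ] Matrix (Fin n) (Fin n) ℂ) : Prop :=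
  ∀ a : Matrix (Fin 2 × Fin J) (Fin 2 × Fin J) ℂ, a.PosSemidef →
    (Matrix.of fun p q : Fin 2 × Fin n =>
      ρ (Matrix.of fun i j => a (p.1, i) (q.1, j)) p.2 q.2).PosSemidef

open Matrix

def myE (α : Type*) : Fin 2 × α ≃ α ⊕ α where
  toFun := fun q => if q.1 = 0 then Sum.inl q.2 else Sum.inr q.2
  invFun := Sum.elim (fun i => (0, i)) (fun i => (1, i))
  left_inv := by rintro ⟨q, i⟩; fin_cases q <;> simp
  right_inv := by rintro (i | i) <;> simp

lemma diag_entry_nonneg {n : ℕ} {A : Matrix (Fin n) (Fin n) ℂ} (hA : A.PosSemidef)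
    (i : Fin n) : 0 ≤ A i i := by
  have := hA.dotProduct_mulVec_nonneg (Pi.single i 1)
  simpa [Matrix.mulVec_single, dotProduct, Pi.single_apply, apply_ite] using this

lemma trace_re_nonneg {n : ℕ} {A : Matrix (Fin n) (Fin n) ℂ} (hA : A.PosSemidef) :
    0 ≤ A.trace.re := by
  rw [Matrix.trace, Complex.re_sum]
  exact Finset.sum_nonneg fun i _ => (Complex.le_def.mp (diag_entry_nonneg hA i)).1

lemma p_sub_psq {J : ℕ} {p : Matrix (Fin J) (Fin J) ℂ} (hp : p.PosSemidef)
    (h1 : (1 - p * p).PosSemidef) : (p - p * p).PosSemidef := by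
  classical
  have hH := hp.1
  set U : Matrix (Fin J) (Fin J) ℂ := (hH.eigenvectorUnitary : Matrix (Fin J) (Fin J) ℂ) with hU
  set D : Matrix (Fin J) (Fin J) ℂ := Matrix.diagonal (RCLike.ofReal ∘ hH.eigenvalues) with hD
  have hUU : star U * U = 1 := by simp [hU]
  have hspec : p = U * D * star U := hH.spectral_theorem
  have hle : ∀ i, hH.eigenvalues i ≤ 1 := by
    intro i
    set v := ⇑(hH.eigenvectorBasis i) with hv0
    have hv := hH.mulVec_eigenvectorBasis i
    have hvv : dotProduct (star v) v = 1 := by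
      rw [hv0, dotProduct_comm, ← EuclideanSpace.inner_eq_star_dotProduct]
      have := hH.eigenvectorBasis.orthonormal.1 i
      rw [inner_self_eq_norm_sq_to_K, this]; simp
    have hv2 : (1 - p * p) *ᵥ v = ((1:ℝ) - hH.eigenvalues i * hH.eigenvalues i) • v := by
      rw [Matrix.sub_mulVec, Matrix.one_mulVec, ← Matrix.mulVec_mulVec, hv,
        Matrix.mulVec_smul, hv, smul_smul, sub_smul, one_smul]
    have h2 := h1.dotProduct_mulVec_nonneg v
    rw [hv2, dotProduct_smul, hvv] at h2
    have h3 : (0:ℝ) ≤ 1 - hH.eigenvalues i * hH.eigenvalues i := by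
      have := (Complex.le_def.mp h2).1
      simpa [Complex.real_smul] using this
    nlinarith [hp.eigenvalues_nonneg i]
  have hpp : p * p = U * (D * D) * star U := by
    conv_lhs => rw [hspec]
    rw [show (U * D * star U) * (U * D * star U) = U * (D * (star U * U) * D) * star U
        by noncomm_ring]
    rw [hUU]; noncomm_ring
  have key : p - p * p =
      U * Matrix.diagonal (fun i =>
        ((hH.eigenvalues i - hH.eigenvalues i * hH.eigenvalues i : ℝ) : ℂ)) * Uᴴ := by
    have hDD : D - D * D = Matrix.diagonal (fun i =>
        ((hH.eigenvalues i - hH.eigenvalues i * hH.eigenvalues i : ℝ) : ℂ)) := by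
      rw [hD, Matrix.diagonal_mul_diagonal]
      ext i j
      by_cases h : i = j <;> simp [Matrix.diagonal_apply, h, Function.comp]
    rw [← Matrix.star_eq_conjTranspose, ← hDD, Matrix.mul_sub, Matrix.sub_mul,
      ← hpp, ← hspec]
  rw [key]
  refine Matrix.PosSemidef.mul_mul_conjTranspose_same ?_ U
  refine Matrix.PosSemidef.diagonal fun i => ?_
  simp only [Pi.zero_apply]
  rw [← Complex.ofReal_zero, Complex.real_le_real]
  nlinarith [hp.eigenvalues_nonneg i, hle i]

lemma amp {J n : ℕ} (ρ : Matrix (Fin J) (Fin J) ℂ →ₗ[ℂ] Matrix (Fin n) (Fin n) ℂ)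
    (h2 : TwoPositive ρ) (A B C D : Matrix (Fin J) (Fin J) ℂ)
    (h : (Matrix.fromBlocks A B C D).PosSemidef) :
    (Matrix.fromBlocks (ρ A) (ρ B) (ρ C) (ρ D)).PosSemidef := by
  have ha := h.submatrix (myE (Fin J))
  have h2a := h2 _ ha
  have heq : (Matrix.of fun p q : Fin 2 × Fin n =>
      ρ (Matrix.of fun i j =>
        ((Matrix.fromBlocks A B C D).submatrix (myE (Fin J)) (myE (Fin J))) (p.1, i) (q.1, j))
        p.2 q.2)
      = (Matrix.fromBlocks (ρ A) (ρ B) (ρ C) (ρ D)).submatrix (myE (Fin n)) (myE (Fin n)) := by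
    ext ⟨q, i⟩ ⟨r, j⟩
    fin_cases q <;> fin_cases r <;>
      simp [myE, Matrix.submatrix_apply, Matrix.of_apply, Matrix.fromBlocks] <;> rfl
  rw [heq] at h2a
  exact (Matrix.posSemidef_submatrix_equiv (myE (Fin n))).mp h2a

lemma kadison_schwarz {J n : ℕ} (ρ : Matrix (Fin J) (Fin J) ℂ →ₗ[ℂ] Matrix (Fin n) (Fin n) ℂ)
    (hunital : ρ 1 = 1) (h2 : TwoPositive ρ) (y : Matrix (Fin J) (Fin J) ℂ) :
    (ρ (yᴴ * y) - (ρ y)ᴴ * ρ y).PosSemidef := by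
  have hblock : (Matrix.fromBlocks 1 y yᴴ (yᴴ * y)).PosSemidef := by
    have heq : Matrix.fromBlocks (1 : Matrix (Fin J) (Fin J) ℂ) y yᴴ (yᴴ * y)
        = (Matrix.fromBlocks 1 y 0 0)ᴴ * (Matrix.fromBlocks 1 y 0 0) := by
      rw [Matrix.fromBlocks_conjTranspose, Matrix.fromBlocks_multiply]
      simp
    rw [heq]
    exact Matrix.posSemidef_conjTranspose_mul_self _
  haveI : Invertible (1 : Matrix (Fin n) (Fin n) ℂ) := invertibleOne
  have hamp := amp ρ h2 1 y yᴴ (yᴴ * y) hblock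
  rw [hunital] at hamp
  have hherm := hamp.1
  rw [Matrix.isHermitian_fromBlocks_iff] at hherm
  obtain ⟨-, hBC, -, -⟩ := hherm
  rw [← hBC] at hamp
  have := (Matrix.PosDef.fromBlocks₁₁ (ρ y) (ρ (yᴴ * y)) Matrix.PosDef.one).mp hamp
  simpa using this

lemma rho_pos {J n : ℕ} (ρ : Matrix (Fin J) (Fin J) ℂ →ₗ[ℂ] Matrix (Fin n) (Fin n) ℂ)
    (hunital : ρ 1 = 1) (h2 : TwoPositive ρ) {c : Matrix (Fin J) (Fin J) ℂ}
    (hc : c.PosSemidef) : (ρ c).PosSemidef := by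
  haveI : Invertible (1 : Matrix (Fin n) (Fin n) ℂ) := invertibleOne
  haveI : Invertible (1 : Matrix (Fin J) (Fin J) ℂ) := invertibleOne
  have h0 : (Matrix.fromBlocks (1 : Matrix (Fin J) (Fin J) ℂ) 0 0ᴴ c).PosSemidef := by
    refine (Matrix.PosDef.fromBlocks₁₁ 0 c Matrix.PosDef.one).mpr ?_
    simpa using hc
  rw [Matrix.conjTranspose_zero] at h0
  have hamp := amp ρ h2 1 0 0 c h0
  rw [hunital, map_zero] at hamp
  rw [show (Matrix.fromBlocks (1 : Matrix (Fin n) (Fin n) ℂ) 0 0 (ρ c))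
      = Matrix.fromBlocks 1 0 0ᴴ (ρ c) by rw [Matrix.conjTranspose_zero]] at hamp
  have := (Matrix.PosDef.fromBlocks₁₁ 0 (ρ c) Matrix.PosDef.one).mp hamp
  simpa using this

/-- If ρ is unital 2-positive, x a contraction with polar decomposition
x = v₀|x| (v₀ unitary), and τ(ρ(x*x)) > 1 − 2ε, then ‖ρ(v₀) − ρ(x)‖₂² < 2ε. -/
theorem stmt8 {J n : ℕ} (hn : 0 < n)
    (ρ : Matrix (Fin J) (Fin J) ℂ →ₗ[ℂ] Matrix (Fin n) (Fin n) ℂ)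
    (hunital : ρ 1 = 1) (h2pos : TwoPositive ρ)
    (x v₀ p : Matrix (Fin J) (Fin J) ℂ)
    (hv₀ : star v₀ * v₀ = 1) (hv₀' : v₀ * star v₀ = 1)
    (hp : p.PosSemidef) (hpsq : p * p = star x * x) (hpolar : x = v₀ * p)
    (hx : (1 - star x * x).PosSemidef)
    (ε : ℝ) (hε : 0 < ε)
    (hτ : 1 - 2 * ε < ((Matrix.trace (ρ (star x * x))) / n).re) :
    ((Matrix.trace (star (ρ v₀ - ρ x) * (ρ v₀ - ρ x))) / n).re < 2 * ε := by
  set y : Matrix (Fin J) (Fin J) ℂ := v₀ * (1 - p) with hy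
  have hρy : ρ y = ρ v₀ - ρ x := by
    rw [hy, Matrix.mul_sub, mul_one, map_sub, hpolar]
  have hyy : yᴴ * y = (1 - p) * (1 - p) := by
    rw [hy, Matrix.conjTranspose_mul]
    have h1p : (1 - p)ᴴ = 1 - p := by
      rw [Matrix.conjTranspose_sub, Matrix.conjTranspose_one, hp.1]
    rw [h1p, show (1 - p) * v₀ᴴ * (v₀ * (1 - p)) = (1 - p) * (v₀ᴴ * v₀) * (1 - p) by
      noncomm_ring]
    rw [show v₀ᴴ * v₀ = star v₀ * v₀ from rfl, hv₀, mul_one]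
  have hKS := kadison_schwarz ρ hunital h2pos y
  have hx' : (1 - p * p).PosSemidef := by rw [hpsq]; exact hx
  have hpp := p_sub_psq hp hx'
  have hcpsd : ((1 - p * p) - (1 - p) * (1 - p)).PosSemidef := by
    rw [show (1 - p * p) - (1 - p) * (1 - p) = (p - p * p) + (p - p * p) by noncomm_ring]
    exact hpp.add hpp
  have hmono := rho_pos ρ hunital h2pos hcpsd
  -- trace inequalities
  have t1 := trace_re_nonneg hKS
  have t2 := trace_re_nonneg hmono
  rw [Matrix.trace_sub, Complex.sub_re, sub_nonneg] at t1
  rw [map_sub, Matrix.trace_sub, Complex.sub_re, sub_nonneg] at t2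
  -- identify traces
  have e1 : Matrix.trace (ρ (1 - p * p)) = (n : ℂ) - Matrix.trace (ρ (star x * x)) := by
    rw [hpsq, map_sub, hunital, Matrix.trace_sub, Matrix.trace_one]
    simp
  set T : ℂ := Matrix.trace (ρ (star x * x)) with hT
  set S : ℂ := Matrix.trace (star (ρ v₀ - ρ x) * (ρ v₀ - ρ x)) with hS
  have hSeq : S = Matrix.trace ((ρ y)ᴴ * ρ y) := by rw [hS, hρy]; rfl
  have key : S.re ≤ ((n : ℂ) - T).re := by
    calc S.re = (Matrix.trace ((ρ y)ᴴ * ρ y)).re := by rw [hSeq]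
      _ ≤ (Matrix.trace (ρ (yᴴ * y))).re := t1
      _ = (Matrix.trace (ρ ((1 - p) * (1 - p)))).re := by rw [hyy]
      _ ≤ (Matrix.trace (ρ (1 - p * p))).re := t2
      _ = ((n : ℂ) - T).re := by rw [e1]
  have hre : ∀ z : ℂ, (z / (n : ℂ)).re = z.re / (n : ℝ) := by
    intro z
    rw [show ((n : ℕ) : ℂ) = ((n : ℝ) : ℂ) by push_cast; ring, Complex.div_ofReal_re]
  rw [hre] at hτ ⊢
  have hn' : (0 : ℝ) < n := by exact_mod_cast hn
  have key' : S.re ≤ (n : ℝ) - T.re := by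
    have : ((n : ℂ) - T).re = (n : ℝ) - T.re := by
      rw [Complex.sub_re]; norm_num
    linarith [key, this.symm.le, this.le]
  have h1 : S.re / (n : ℝ) ≤ 1 - T.re / (n : ℝ) := by
    rw [div_le_iff₀ hn']
    field_simp
    linarith
  linarith
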